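/- Let k be a positive integer, let x₁, …, x_k and y₁, …, y_k be nonnegative reals with y_i ≥ x_i for every i, let X₁, …, X_k be independent centered Gaussians with variances x₁, …, x_k, and let Y₁, …, Y_k be independent centered Gaussians with variances y₁, …, y_k. Then for every t > 0, Pr[ Σ_{i=1}^k Y_i² ≤ t ] ≤ Pr[ Σ_{i=1}^k X_i² ≤ t ]. -/

import Mathlib

open MeasureTheory ProbabilityTheory
open scoped NNReal

/-- The joint law of finitely many independent real random variables is the product of
their laws. -/
lemma map_fun_eq_pi_aux {Ω : Type*} [MeasurableSpace Ω] (μ : Measure Ω)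
    [IsProbabilityMeasure μ] {k : ℕ} (Z : Fin k → Ω → ℝ) (hmeas : ∀ i, Measurable (Z i))
    (hindep : iIndepFun Z μ) :
    Measure.pi (fun i => μ.map (Z i)) = μ.map (fun ω i => Z i ω) := by
  haveI : ∀ i, IsProbabilityMeasure (μ.map (Z i)) :=
    fun i => Measure.isProbabilityMeasure_map (hmeas i).aemeasurable
  refine Measure.pi_eq fun s hs => ?_
  rw [Measure.map_apply (measurable_pi_lambda _ hmeas) (MeasurableSet.univ_pi hs)]
  have hpre : (fun ω i => Z i ω) ⁻¹' Set.pi Set.univ s = ⋂ i ∈ Finset.univ, Z i ⁻¹' s i := by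
    ext ω; simp [Set.mem_pi]
  rw [hpre, hindep.measure_inter_preimage_eq_mul Finset.univ (fun i _ => hs i)]
  exact Finset.prod_congr rfl fun i _ => (Measure.map_apply (hmeas i) (hs i)).symm

/-- Let `X₁,…,X_k` be independent centered Gaussians with variances `x₁,…,x_k`
and `Y₁,…,Y_k` independent centered Gaussians with variances `y₁,…,y_k`, where `yᵢ ≥ xᵢ` for
every `i`.  Then for every `t > 0`, `Pr[∑ Yᵢ² ≤ t] ≤ Pr[∑ Xᵢ² ≤ t]`. -/
theorem gaussian_sum_square_tail_monotone {Ω₁ Ω₂ : Type*} [MeasurableSpace Ω₁]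
    [MeasurableSpace Ω₂] (μ₁ : Measure Ω₁) (μ₂ : Measure Ω₂)
    [IsProbabilityMeasure μ₁] [IsProbabilityMeasure μ₂]
    (k : ℕ) (hk : 0 < k) (x y : Fin k → ℝ≥0) (hxy : ∀ i, x i ≤ y i)
    (X : Fin k → Ω₁ → ℝ) (Y : Fin k → Ω₂ → ℝ)
    (hXmeas : ∀ i, Measurable (X i)) (hYmeas : ∀ i, Measurable (Y i))
    (hXlaw : ∀ i, μ₁.map (X i) = gaussianReal 0 (x i))
    (hYlaw : ∀ i, μ₂.map (Y i) = gaussianReal 0 (y i))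
    (hXindep : iIndepFun X μ₁)
    (hYindep : iIndepFun Y μ₂)
    (t : ℝ) (ht : 0 < t) :
    μ₂ {ω | ∑ i, Y i ω ^ 2 ≤ t} ≤ μ₁ {ω | ∑ i, X i ω ^ 2 ≤ t} := by
  classical
  -- the event, as a subset of `Fin k → ℝ`
  set A : Set (Fin k → ℝ) := {v | ∑ i, v i ^ 2 ≤ t} with hA_def
  have hA : MeasurableSet A := by
    apply measurableSet_le _ measurable_const
    exact Finset.measurable_sum _ fun i _ => (measurable_pi_apply i).pow_const 2
  -- joint laws
  have hXpi : Measure.pi (fun i => gaussianReal 0 (x i)) = μ₁.map (fun ω i => X i ω) := by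
    rw [← map_fun_eq_pi_aux μ₁ X hXmeas hXindep]
    exact congrArg Measure.pi (funext fun i => (hXlaw i).symm)
  have hYpi : Measure.pi (fun i => gaussianReal 0 (y i)) = μ₂.map (fun ω i => Y i ω) := by
    rw [← map_fun_eq_pi_aux μ₂ Y hYmeas hYindep]
    exact congrArg Measure.pi (funext fun i => (hYlaw i).symm)
  -- the scaling constants
  set c : Fin k → ℝ := fun i => Real.sqrt ((x i : ℝ) / (y i : ℝ)) with hc
  have hc0 : ∀ i, 0 ≤ c i := fun i => Real.sqrt_nonneg _
  have hc1 : ∀ i, c i ≤ 1 := by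
    intro i
    rcases eq_or_ne (y i) 0 with h | h
    · simp [hc, h]
    · have hy : (0 : ℝ) < y i := by positivity
      exact Real.sqrt_le_one.mpr (by rw [div_le_one hy]; exact_mod_cast hxy i)
  -- scaling transports the `y` Gaussians to the `x` Gaussians
  have hgauss : ∀ i, (gaussianReal 0 (y i)).map (fun v => c i * v) = gaussianReal 0 (x i) := by
    intro i
    rw [show (fun v => c i * v) = (c i * ·) from rfl, gaussianReal_map_const_mul, mul_zero]
    congr 1
    apply NNReal.coe_injective
    push_cast
    rw [hc, Real.sq_sqrt (by positivity)]
    rcases eq_or_ne (y i) 0 with h | h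
    · have hx : x i = 0 := le_antisymm (h ▸ hxy i) zero_le
      simp [h, hx]
    · have hy : ((y i : ℝ)) ≠ 0 := by exact_mod_cast h
      field_simp
  -- scaling transports the product measures
  have hTmeas : Measurable (fun v : Fin k → ℝ => fun i => c i * v i) :=
    measurable_pi_lambda _ fun i => (measurable_pi_apply i).const_mul _
  have hT : (Measure.pi fun i => gaussianReal 0 (y i)).map (fun v i => c i * v i)
      = Measure.pi fun i => gaussianReal 0 (x i) := by
    symm
    refine Measure.pi_eq fun s hs => ?_
    rw [Measure.map_apply hTmeas (MeasurableSet.univ_pi hs)]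
    have hpre : (fun v (i : Fin k) => c i * v i) ⁻¹' Set.pi Set.univ s
        = Set.pi Set.univ (fun i => (fun v => c i * v) ⁻¹' s i) := by
      ext v; simp [Set.mem_pi]
    rw [hpre, Measure.pi_pi]
    exact Finset.prod_congr rfl fun i _ => by
      rw [← hgauss i, Measure.map_apply (measurable_const_mul (c i)) (hs i)]
  -- express both probabilities via the product measures
  have eX : μ₁ {ω | ∑ i, X i ω ^ 2 ≤ t} = (Measure.pi fun i => gaussianReal 0 (x i)) A := by
    rw [hXpi, Measure.map_apply (measurable_pi_lambda _ hXmeas) hA]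
    rfl
  have eY : μ₂ {ω | ∑ i, Y i ω ^ 2 ≤ t} = (Measure.pi fun i => gaussianReal 0 (y i)) A := by
    rw [hYpi, Measure.map_apply (measurable_pi_lambda _ hYmeas) hA]
    rfl
  rw [eX, eY, ← hT, Measure.map_apply hTmeas hA]
  apply measure_mono
  intro v hv
  simp only [hA_def, Set.mem_setOf_eq, Set.mem_preimage] at hv ⊢
  refine le_trans (Finset.sum_le_sum fun i _ => ?_) hv
  have h1 : (c i * v i) ^ 2 = (c i) ^ 2 * (v i) ^ 2 := by ring
  rw [h1]
  exact mul_le_of_le_one_left (sq_nonneg _) (pow_le_one₀ (hc0 i) (hc1 i))
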